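/- For fixed n ≥ 1, the total number of perfectly matchable sets of cat(n,k) is asymptotic to k^n as k → ∞; that is, p(cat(n,k); 1)/k^n → 1. -/

import Mathlib

open Polynomial

variable {V : Type*}

/-- `M` (a finite set of edges) is a matching of the graph `G`:
its members are edges of `G` and no two distinct members share an endpoint. -/
def IsGraphMatching (G : SimpleGraph V) (M : Finset (Sym2 V)) : Prop :=
  (M : Set (Sym2 V)) ⊆ G.edgeSet ∧
    ∀ e ∈ M, ∀ f ∈ M, e ≠ f → ∀ x, x ∈ e → x ∉ f

/-- The set of vertices covered by the edge set `M` is exactly `S`. -/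
def Covers (M : Finset (Sym2 V)) (S : Finset V) : Prop :=
  ∀ x, x ∈ S ↔ ∃ e ∈ M, x ∈ e

/-- `M` is a perfect matching of the induced subgraph `G[S]`. -/
def IsPerfectMatchingOn (G : SimpleGraph V) (M : Finset (Sym2 V)) (S : Finset V) : Prop :=
  IsGraphMatching G M ∧ Covers M S

/-- `S` is a perfectly matchable set of `G`. -/
def IsPMS (G : SimpleGraph V) (S : Finset V) : Prop :=
  ∃ M, IsPerfectMatchingOn G M S

open Classical in
/-- The perfectly matchable set polynomial of the subgraph of `G` induced on the
ground vertex set `A`: the generating function `∑ p_{2k} z^k` where `p_{2k}` is the number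
of perfectly matchable sets `S ⊆ A` with `|S| = 2k`. -/
noncomputable def pmPoly [Fintype V] (G : SimpleGraph V) (A : Finset V) : Polynomial ℤ :=
  ∑ S ∈ A.powerset, if IsPMS G S then X ^ (S.card / 2) else 0

/-- `G` has no cycle of even length. -/
def NoEvenCycle (G : SimpleGraph V) : Prop :=
  ∀ (v : V) (c : G.Walk v v), c.IsCycle → ¬ Even c.length

/-- The caterpillar `cat(n, k)`: a spine path on `n` vertices (`Sum.inl i`), each spine
vertex `i` adjacent to `k` pendant leaves (`Sum.inr (i, j)`). -/
def caterpillar (n k : ℕ) : SimpleGraph (Fin n ⊕ Fin n × Fin k) :=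
  SimpleGraph.fromRel (fun a b =>
    match a, b with
    | Sum.inl i, Sum.inl j => (i : ℕ) + 1 = (j : ℕ)
    | Sum.inl i, Sum.inr (j, _) => i = j
    | _, _ => False)

-- adjacency to a leaf
lemma cat_adj_leaf {n k : ℕ} {i : Fin n} {j : Fin k} {b : Fin n ⊕ Fin n × Fin k} :
    (caterpillar n k).Adj (Sum.inr (i, j)) b ↔ b = Sum.inl i := by
  constructor
  · rintro ⟨hne, h | h⟩
    · cases b <;> simp_all [caterpillar]
    · match b, h with
      | Sum.inl i', h => simp_all
  · rintro rfl
    exact ⟨by simp, Or.inr rfl⟩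

-- any matching edge containing a leaf is the pendant edge
lemma leaf_edge {n k : ℕ} {M : Finset (Sym2 (Fin n ⊕ Fin n × Fin k))}
    {S : Finset (Fin n ⊕ Fin n × Fin k)}
    (hM : IsPerfectMatchingOn (caterpillar n k) M S) {i : Fin n} {j : Fin k}
    (hin : Sum.inr (i, j) ∈ S) : s(Sum.inl i, Sum.inr (i, j)) ∈ M := by
  obtain ⟨e, heM, he⟩ := (hM.2 _).1 hin
  have hedge := hM.1.1 heM
  induction e with
  | h a b =>
    rw [SimpleGraph.mem_edgeSet] at hedge
    rw [Sym2.mem_iff] at he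
    rcases he with rfl | rfl
    · rw [cat_adj_leaf] at hedge
      subst hedge
      rwa [Sym2.eq_swap]
    · rw [SimpleGraph.adj_comm, cat_adj_leaf] at hedge
      subst hedge
      exact heM

lemma leaf_spine {n k : ℕ} {M : Finset (Sym2 (Fin n ⊕ Fin n × Fin k))}
    {S : Finset (Fin n ⊕ Fin n × Fin k)}
    (hM : IsPerfectMatchingOn (caterpillar n k) M S) {i : Fin n} {j : Fin k}
    (hin : Sum.inr (i, j) ∈ S) : Sum.inl i ∈ S :=
  (hM.2 _).2 ⟨_, leaf_edge hM hin, by simp⟩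

lemma leaf_unique {n k : ℕ} {M : Finset (Sym2 (Fin n ⊕ Fin n × Fin k))}
    {S : Finset (Fin n ⊕ Fin n × Fin k)}
    (hM : IsPerfectMatchingOn (caterpillar n k) M S) {i : Fin n} {j j' : Fin k}
    (hj : Sum.inr (i, j) ∈ S) (hj' : Sum.inr (i, j') ∈ S) : j = j' := by
  by_contra hne
  have h1 := leaf_edge hM hj
  have h2 := leaf_edge hM hj'
  have hneq : s(Sum.inl i, Sum.inr (i, j)) ≠ s(Sum.inl i, Sum.inr (i, j')) := by
    simp [Sym2.eq_iff, hne]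
  exact hM.1.2 _ h1 _ h2 hneq (Sum.inl i) (by simp) (by simp)

open Classical in
noncomputable def enc (n k : ℕ) (S : Finset (Fin n ⊕ Fin n × Fin k)) : Fin n → Fin (k + 2) :=
  fun i =>
    if h : ∃ j : Fin k, Sum.inr (i, j) ∈ S then (h.choose).castLE (by omega)
    else if Sum.inl i ∈ S then ⟨k, by omega⟩ else ⟨k + 1, by omega⟩

lemma enc_leaf {n k : ℕ} {S : Finset (Fin n ⊕ Fin n × Fin k)} (hS : IsPMS (caterpillar n k) S)
    {i : Fin n} {j : Fin k} : Sum.inr (i, j) ∈ S ↔ (enc n k S i : ℕ) = j := by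
  obtain ⟨M, hM⟩ := hS
  constructor
  · intro hin
    have h : ∃ j : Fin k, Sum.inr (i, j) ∈ S := ⟨j, hin⟩
    rw [enc, dif_pos h, Fin.coe_castLE]
    exact congrArg Fin.val (leaf_unique hM h.choose_spec hin)
  · intro hval
    by_cases h : ∃ j : Fin k, Sum.inr (i, j) ∈ S
    · rw [enc, dif_pos h, Fin.coe_castLE] at hval
      have heq : h.choose = j := Fin.ext hval
      rw [← heq]; exact h.choose_spec
    · exfalso
      rw [enc, dif_neg h] at hval
      have hj := j.isLt
      split at hval <;> simp_all <;> omega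

lemma enc_spine {n k : ℕ} {S : Finset (Fin n ⊕ Fin n × Fin k)} (hS : IsPMS (caterpillar n k) S)
    {i : Fin n} : Sum.inl i ∈ S ↔ (enc n k S i : ℕ) ≠ k + 1 := by
  obtain ⟨M, hM⟩ := hS
  by_cases h : ∃ j : Fin k, Sum.inr (i, j) ∈ S
  · rw [enc, dif_pos h, Fin.coe_castLE]
    have := (h.choose).isLt
    simp only [ne_eq]
    constructor
    · intro _; omega
    · intro _; exact leaf_spine hM h.choose_spec
  · rw [enc, dif_neg h]
    by_cases hi : Sum.inl i ∈ S <;> simp [hi]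

lemma enc_injOn {n k : ℕ} {S S' : Finset (Fin n ⊕ Fin n × Fin k)}
    (hS : IsPMS (caterpillar n k) S) (hS' : IsPMS (caterpillar n k) S')
    (h : enc n k S = enc n k S') : S = S' := by
  ext x
  match x with
  | Sum.inl i => rw [enc_spine hS, enc_spine hS', h]
  | Sum.inr (i, j) => rw [enc_leaf hS, enc_leaf hS', h]

open Classical in
noncomputable def pmsCount (n k : ℕ) : ℕ :=
  ((Finset.univ : Finset (Fin n ⊕ Fin n × Fin k)).powerset.filter
    (fun S => IsPMS (caterpillar n k) S)).card

open Classical in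
lemma pmPoly_eval_one (n k : ℕ) :
    ((pmPoly (caterpillar n k) Finset.univ).eval 1 : ℤ) = (pmsCount n k : ℤ) := by
  rw [pmPoly, eval_finset_sum, pmsCount]
  rw [← Finset.sum_boole]
  refine Finset.sum_congr rfl fun S _ => ?_
  split <;> simp

open Classical in
lemma pmsCount_le (n k : ℕ) : pmsCount n k ≤ (k + 2) ^ n := by
  have : pmsCount n k ≤ (Finset.univ : Finset (Fin n → Fin (k + 2))).card := by
    apply Finset.card_le_card_of_injOn (enc n k)
    · intro S _; exact Finset.mem_univ _
    · intro S hS S' hS' h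
      simp only [Finset.coe_filter, Set.mem_setOf_eq] at hS hS'
      exact enc_injOn hS.2 hS'.2 h
  simpa using this

def decS (n k : ℕ) (f : Fin n → Fin k) : Finset (Fin n ⊕ Fin n × Fin k) :=
  Finset.univ.image Sum.inl ∪ Finset.univ.image (fun i => Sum.inr (i, f i))

lemma mem_decS {n k : ℕ} {f : Fin n → Fin k} {x : Fin n ⊕ Fin n × Fin k} :
    x ∈ decS n k f ↔ (∃ i, x = Sum.inl i) ∨ (∃ i, x = Sum.inr (i, f i)) := by
  simp [decS, eq_comm]

lemma decS_pms (n k : ℕ) (f : Fin n → Fin k) : IsPMS (caterpillar n k) (decS n k f) := by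
  refine ⟨Finset.univ.image (fun i => s(Sum.inl i, Sum.inr (i, f i))), ⟨?_, ?_⟩, ?_⟩
  · intro e he
    simp only [Finset.coe_image, Set.mem_image, Finset.coe_univ, Set.image_univ,
      Set.mem_range] at he
    obtain ⟨i, rfl⟩ := he
    rw [SimpleGraph.mem_edgeSet]
    exact ⟨by simp, Or.inl rfl⟩
  · intro e he e' he' hne x hx
    simp only [Finset.mem_image, Finset.mem_univ, true_and] at he he'
    obtain ⟨i, rfl⟩ := he
    obtain ⟨i', rfl⟩ := he'
    have hii : i ≠ i' := fun h => hne (by rw [h])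
    rw [Sym2.mem_iff] at hx ⊢
    rcases hx with rfl | rfl <;> intro hmem <;> rcases hmem with h | h <;> simp_all
  · intro x
    rw [mem_decS]
    simp only [Finset.mem_image, Finset.mem_univ, true_and]
    constructor
    · rintro (⟨i, rfl⟩ | ⟨i, rfl⟩) <;> exact ⟨_, ⟨i, rfl⟩, by simp⟩
    · rintro ⟨e, ⟨i, rfl⟩, hx⟩
      rw [Sym2.mem_iff] at hx
      rcases hx with rfl | rfl
      · exact Or.inl ⟨i, rfl⟩
      · exact Or.inr ⟨i, rfl⟩

open Classical in
lemma le_pmsCount (n k : ℕ) : k ^ n ≤ pmsCount n k := by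
  have : (Finset.univ : Finset (Fin n → Fin k)).card ≤ pmsCount n k := by
    apply Finset.card_le_card_of_injOn (decS n k)
    · intro f _
      simp only [Finset.mem_coe, Finset.mem_filter, Finset.mem_powerset]
      exact ⟨Finset.subset_univ _, decS_pms n k f⟩
    · intro f _ g _ h
      funext i
      have : Sum.inr (i, f i) ∈ decS n k g := by rw [← h, mem_decS]; exact Or.inr ⟨i, rfl⟩
      rw [mem_decS] at this
      rcases this with ⟨i', hi⟩ | ⟨i', hi⟩
      · exact absurd hi (by simp)
      · injection hi with hi
        obtain ⟨h1, h2⟩ := Prod.mk.injEq .. ▸ hi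
        simp_all
  simpa using this


open Filter in
/-- for fixed `n ≥ 1`, `p(cat(n,k); 1) / kⁿ → 1` as `k → ∞`. -/
theorem stmt15 (n : ℕ) (hn : 1 ≤ n) :
    Tendsto (fun k : ℕ =>
        ((((pmPoly (caterpillar n k) Finset.univ).eval 1 : ℤ) : ℝ) / (k : ℝ) ^ n))
      atTop (nhds 1) := by
  have hupper : Tendsto (fun k : ℕ => ((k : ℝ) + 2) ^ n / (k : ℝ) ^ n) atTop (nhds 1) := by
    have h2 : Tendsto (fun k : ℕ => 2 / (k : ℝ)) atTop (nhds 0) :=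
      tendsto_const_nhds.div_atTop tendsto_natCast_atTop_atTop
    have h3 : Tendsto (fun k : ℕ => (1 + 2 / (k : ℝ)) ^ n) atTop (nhds 1) := by
      have := ((tendsto_const_nhds (x := (1:ℝ))).add h2).pow n
      simpa using this
    refine h3.congr' ?_
    filter_upwards [eventually_ge_atTop 1] with k hk
    have hk0 : (k : ℝ) ≠ 0 := Nat.cast_ne_zero.mpr (by omega)
    rw [← div_pow]
    congr 1
    field_simp
  refine tendsto_of_tendsto_of_tendsto_of_le_of_le' tendsto_const_nhds hupper ?_ ?_
  · filter_upwards [eventually_ge_atTop 1] with k hk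
    rw [pmPoly_eval_one n k]
    have hkpos : (0 : ℝ) < (k : ℝ) := by exact_mod_cast hk
    have hpos : (0 : ℝ) < (k : ℝ) ^ n := by positivity
    rw [le_div_iff₀ hpos, one_mul]
    push_cast
    exact_mod_cast le_pmsCount n k
  · filter_upwards with k
    rw [pmPoly_eval_one n k]
    push_cast
    gcongr
    exact_mod_cast pmsCount_le n k
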